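/- arXiv:1108.5781 — 4 statements merged into one kernel-verified Lean document; each statement's English description precedes it below -/
import Mathlib

section
/- (Lemma 'Distance Estimator'.) For every t ≥ 0, ∑_{i∈Φ} ∑_{j∈Φ} ν_i π_i (exp(tQ))_{ij} ν_j = e^{−t}. Equivalently, if F^{ab} is the matrix with entries F_{ij} = π_i (exp(tQ))_{ij}, then ν^⊤ F^{ab} ν = e^{−t}; this is the statement E[e^{−τ̂(a,b)}] = e^{−τ(a,b)} for two leaves at evolutionary distance t. -/
open scoped BigOperators

/-- The matrix exponential of a real `Φ × Φ` matrix. -/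
noncomputable def matExp {Φ : Type*} [Fintype Φ] [DecidableEq Φ] (A : Matrix Φ Φ ℝ) :
    Matrix Φ Φ ℝ := NormedSpace.exp A

attribute [local instance] Matrix.linftyOpNormedRing Matrix.linftyOpNormedAlgebra

lemma exp_mulVec_eigen {Φ : Type*} [Fintype Φ] [DecidableEq Φ]
    (A : Matrix Φ Φ ℝ) (ν : Φ → ℝ) (c : ℝ) (h : A.mulVec ν = c • ν) :
    (NormedSpace.exp A).mulVec ν = Real.exp c • ν := by
  have hpow : ∀ n : ℕ, (A ^ n).mulVec ν = (c ^ n) • ν := by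
    intro n
    induction n with
    | zero => simp
    | succ n ih =>
      rw [pow_succ, ← Matrix.mulVec_mulVec, h, Matrix.mulVec_smul, ih,
        smul_smul, pow_succ, mul_comm]
  let f : Matrix Φ Φ ℝ →L[ℝ] (Φ → ℝ) :=
    LinearMap.toContinuousLinearMap
      { toFun := fun M => M.mulVec ν
        map_add' := fun M N => Matrix.add_mulVec M N ν
        map_smul' := fun r M => Matrix.smul_mulVec r M ν }
  have hf : ∀ M : Matrix Φ Φ ℝ, f M = M.mulVec ν := fun M => rfl
  have hsum := NormedSpace.expSeries_summable' (𝕂 := ℝ) A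
  have key : f (NormedSpace.exp A) = ∑' n : ℕ, f (((n.factorial : ℕ) : ℝ)⁻¹ • A ^ n) := by
    rw [NormedSpace.exp_eq_tsum ℝ]
    exact f.map_tsum hsum
  rw [hf] at key
  rw [key]
  have : ∀ n : ℕ, f (((n.factorial : ℕ) : ℝ)⁻¹ • A ^ n) = (((n.factorial : ℕ) : ℝ)⁻¹ * c ^ n) • ν := by
    intro n
    rw [map_smul, hf, hpow, smul_smul]
  rw [tsum_congr this, Summable.tsum_smul_const]
  · congr 1
    rw [Real.exp_eq_exp_ℝ, NormedSpace.exp_eq_tsum ℝ]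
    exact (tsum_congr fun n => by rw [smul_eq_mul]).symm
  · have := NormedSpace.expSeries_summable' (𝕂 := ℝ) c
    simpa [smul_eq_mul] using this

/-- (Distance Estimator.) For a GTR rate matrix `Q` reversible w.r.t. `π`, with second
right eigenvector `ν` (`Qν = −ν`) normalized so that `∑ π_i ν_i² = 1`, for every `t ≥ 0`,
`∑_i ∑_j ν_i π_i (exp(tQ))_{ij} ν_j = e^{−t}`, i.e. `E[e^{−τ̂(a,b)}] = e^{−τ(a,b)}`. -/
theorem distance_estimator_unbiased {Φ : Type*} [Fintype Φ] [DecidableEq Φ]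
    (hcard : 2 ≤ Fintype.card Φ)
    (Q : Matrix Φ Φ ℝ) (π ν : Φ → ℝ)
    (hQoff : ∀ i j, i ≠ j → 0 < Q i j)
    (hQrow : ∀ i, ∑ j : Φ, Q i j = 0)
    (hπpos : ∀ i, 0 < π i)
    (hπsum : ∑ i : Φ, π i = 1)
    (hrev : ∀ i j, π i * Q i j = π j * Q j i)
    (hν : Q.mulVec ν = -ν)
    (hnorm : ∑ i : Φ, π i * ν i ^ 2 = 1) :
    ∀ t : ℝ, 0 ≤ t →
      ∑ i : Φ, ∑ j : Φ, ν i * π i * (matExp (t • Q)) i j * ν j = Real.exp (-t) := by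
  intro t ht
  have heig : (t • Q).mulVec ν = (-t) • ν := by
    rw [Matrix.smul_mulVec, hν]
    ext i; simp [mul_comm]
  have hexp := exp_mulVec_eigen (t • Q) ν (-t) heig
  have hmv : ∀ i, ∑ j : Φ, (matExp (t • Q)) i j * ν j = Real.exp (-t) * ν i := by
    intro i
    have := congrFun hexp i
    simpa [Matrix.mulVec, dotProduct, matExp] using this
  calc ∑ i : Φ, ∑ j : Φ, ν i * π i * (matExp (t • Q)) i j * ν j
      = ∑ i : Φ, ν i * π i * ∑ j : Φ, (matExp (t • Q)) i j * ν j := by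
        refine Finset.sum_congr rfl fun i _ => ?_
        rw [Finset.mul_sum]; exact Finset.sum_congr rfl fun j _ => by ring
    _ = Real.exp (-t) * ∑ i : Φ, π i * ν i ^ 2 := by
        rw [Finset.mul_sum]
        exact Finset.sum_congr rfl fun i _ => by rw [hmv]; ring
    _ = Real.exp (-t) := by rw [hnorm, mul_one]
end

section
/- (Proposition 'Weighted Majority: GTR Version', mean part.) For every integer h ≥ 1, every edge-weight assignment with τ_v > 0 for all nonempty v, and every unit flow Ψ: (i) for each i ∈ Φ, ∑_{x : V → Φ, x_ρ = i} P(x) S(x) = π_i ν_i (i.e., E[S | ξ_ρ = i] = ν_i); and (ii) ∑_{x : V → Φ} P(x) S(x) = 0 (i.e., E[S] = 0). -/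
open scoped BigOperators

/-- Sum of edge weights along the ancestor path of `v` (heap indexing of the binary
tree: vertices are positive integers, the root is `1`, and the parent of `v ≥ 2` is
`v / 2`), stopping at (and excluding) the ancestor `a`.  This is `τ(a, v)`. -/
noncomputable def pathSum (τ : ℕ → ℝ) (a : ℕ) (v : ℕ) : ℝ :=
  if _h : v ≤ a then 0 else τ v + pathSum τ a (v / 2)
termination_by v
decreasing_by omega

/-- Lowest common ancestor (longest common prefix) of two same-level vertices in heap
indexing. -/
def lca (a b : ℕ) : ℕ :=
  if a = b then a else lca (a / 2) (b / 2)
termination_by a + b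
decreasing_by omega

/-- Tree distance `τ(a,b) = τ(c,a) + τ(c,b)` where `c` is the longest common prefix of
the same-level vertices `a` and `b`. -/
noncomputable def treeDist (τ : ℕ → ℝ) (a b : ℕ) : ℝ :=
  pathSum τ (lca a b) a + pathSum τ (lca a b) b

/-- Interpret a heap-index vertex `v ∈ {1, …, 2^{h+1} − 1}` of the complete binary tree
of depth `h` as an index into configurations (binary strings of length `m ≤ h`
correspond to the integers in `[2^m, 2^{m+1})`). -/
def idx (h v : ℕ) : Fin (2 ^ (h + 1) - 1) :=
  ⟨(v - 1) % (2 ^ (h + 1) - 1), Nat.mod_lt _ (by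
    have : 2 ^ 1 ≤ 2 ^ (h + 1) := Nat.pow_le_pow_right (by norm_num) (by omega)
    omega)⟩

/-- The GTR law on the complete binary tree of depth `h`: the probability
`P(x) = π(x_ρ) ∏_{v nonempty} (exp(τ_v Q))_{x_{parent(v)}, x_v}` of a configuration
`x` (configurations assign a state to each of the `2^{h+1} − 1` vertices). -/
noncomputable def gtrP {Φ : Type*} [Fintype Φ] [DecidableEq Φ]
    (h : ℕ) (π : Φ → ℝ) (Q : Matrix Φ Φ ℝ) (τ : ℕ → ℝ)
    (x : Fin (2 ^ (h + 1) - 1) → Φ) : ℝ :=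
  π (x (idx h 1)) *
    ∏ v ∈ Finset.Ico 2 (2 ^ (h + 1)),
      (matExp (τ v • Q)) (x (idx h (v / 2))) (x (idx h v))

/-- The estimator `S(x) = ∑_{ℓ leaf} Ψ(ℓ) ν_{x_ℓ} / Θ_{ρ,ℓ}` with `Θ_{ρ,ℓ} = e^{−τ(ρ,ℓ)}`. -/
noncomputable def estS {Φ : Type*} [Fintype Φ] [DecidableEq Φ]
    (h : ℕ) (ν : Φ → ℝ) (τ Ψ : ℕ → ℝ) (x : Fin (2 ^ (h + 1) - 1) → Φ) : ℝ :=
  ∑ ℓ ∈ Finset.Ico (2 ^ h) (2 ^ (h + 1)),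
    Ψ ℓ * ν (x (idx h ℓ)) * Real.exp (pathSum τ 1 ℓ)

/-- `K_Ψ = ∑_{v nonempty} (1 − e^{−2τ_v}) e^{2τ(ρ,v)} Ψ(v)²`. -/
noncomputable def Kflow (h : ℕ) (τ Ψ : ℕ → ℝ) : ℝ :=
  ∑ v ∈ Finset.Ico 2 (2 ^ (h + 1)),
    (1 - Real.exp (-(2 * τ v))) * Real.exp (2 * pathSum τ 1 v) * Ψ v ^ 2

/-- `Ψ` is a unit flow from the root to the leaves of the depth-`h` tree: nonnegative,
`Ψ(ρ) = 1`, and `Ψ(v) = Ψ(v0) + Ψ(v1)` for internal vertices. -/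
def IsUnitFlow (h : ℕ) (Ψ : ℕ → ℝ) : Prop :=
  Ψ 1 = 1 ∧ (∀ v, 1 ≤ v → v < 2 ^ (h + 1) → 0 ≤ Ψ v) ∧
    ∀ v, 1 ≤ v → v < 2 ^ h → Ψ v = Ψ (2 * v) + Ψ (2 * v + 1)

lemma two_le_pow (h : ℕ) : 2 ≤ 2 ^ (h + 1) := by
  have : 2 ^ 1 ≤ 2 ^ (h + 1) := Nat.pow_le_pow_right (by norm_num) (by omega)
  simpa using this

lemma idx_ne {h v w : ℕ} (hv1 : 1 ≤ v) (hv2 : v < 2 ^ (h + 1)) (hw1 : 1 ≤ w)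
    (hw2 : w < 2 ^ (h + 1)) (hne : v ≠ w) : idx h v ≠ idx h w := by
  have hb := two_le_pow h
  intro hEq
  apply hne
  have := congrArg Fin.val hEq
  simp only [idx] at this
  rw [Nat.mod_eq_of_lt (by omega), Nat.mod_eq_of_lt (by omega)] at this
  omega


def anc (m ℓ : ℕ) : ℕ :=
  if ℓ ≤ 1 ∨ ℓ < m then ℓ else anc m (ℓ / 2)
termination_by ℓ
decreasing_by omega

lemma anc_of_lt {m ℓ : ℕ} (h : ℓ < m) : anc m ℓ = ℓ := by
  rw [anc]; simp [h]

lemma anc_lt {m : ℕ} (hm : 2 ≤ m) : ∀ ℓ : ℕ, anc m ℓ < m := by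
  intro ℓ
  induction ℓ using Nat.strong_induction_on with
  | _ ℓ ih =>
    by_cases h : ℓ ≤ 1 ∨ ℓ < m
    · rw [anc, if_pos h]; omega
    · rw [anc, if_neg h]; exact ih (ℓ / 2) (by omega)

lemma anc_pos {m : ℕ} : ∀ ℓ : ℕ, 1 ≤ ℓ → 1 ≤ anc m ℓ := by
  intro ℓ
  induction ℓ using Nat.strong_induction_on with
  | _ ℓ ih =>
    intro hl
    by_cases h : ℓ ≤ 1 ∨ ℓ < m
    · rw [anc, if_pos h]; omega
    · rw [anc, if_neg h]; exact ih (ℓ / 2) (by omega) (by omega)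

lemma anc_anc {m m' : ℕ} (h : m ≤ m') : ∀ ℓ : ℕ, anc m ℓ = anc m (anc m' ℓ) := by
  intro ℓ
  induction ℓ using Nat.strong_induction_on with
  | _ ℓ ih =>
    by_cases hg : ℓ ≤ 1 ∨ ℓ < m'
    · rw [show anc m' ℓ = ℓ from by rw [anc, if_pos hg]]
    · rw [show anc m' ℓ = anc m' (ℓ / 2) from by rw [anc, if_neg hg],
        ← ih (ℓ / 2) (by omega),
        show anc m ℓ = anc m (ℓ / 2) from by rw [anc, if_neg (by omega)]]

lemma anc_two : ∀ ℓ : ℕ, 1 ≤ ℓ → anc 2 ℓ = 1 := by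
  intro ℓ
  induction ℓ using Nat.strong_induction_on with
  | _ ℓ ih =>
    intro hl
    by_cases h : ℓ ≤ 1 ∨ ℓ < 2
    · rw [anc, if_pos h]; omega
    · rw [anc, if_neg h]; exact ih (ℓ / 2) (by omega) (by omega)

lemma anc_step {n ℓ : ℕ} (hn : 2 ≤ n) (hl : 1 ≤ ℓ) :
    (anc (n + 1) ℓ = n ∧ anc n ℓ = n / 2) ∨
      (anc (n + 1) ℓ = anc n ℓ ∧ anc (n + 1) ℓ < n) := by
  have ha : anc (n + 1) ℓ < n + 1 := anc_lt (by omega) ℓ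
  have h2 : anc n ℓ = anc n (anc (n + 1) ℓ) := anc_anc (Nat.le_succ n) ℓ
  by_cases hc : anc (n + 1) ℓ = n
  · left
    refine ⟨hc, ?_⟩
    rw [h2, hc, anc, if_neg (by omega), anc_of_lt (by omega)]
  · right
    have hlt : anc (n + 1) ℓ < n := by omega
    exact ⟨(h2.trans (anc_of_lt hlt)).symm, hlt⟩

lemma pathSum_one_one (τ : ℕ → ℝ) : pathSum τ 1 1 = 0 := by
  rw [pathSum]; simp

lemma pathSum_one_step (τ : ℕ → ℝ) {n : ℕ} (hn : 2 ≤ n) :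
    pathSum τ 1 n = τ n + pathSum τ 1 (n / 2) := by
  rw [pathSum, dif_neg (by omega)]

lemma sum_Ico_double (f : ℕ → ℝ) (a : ℕ) : ∀ b : ℕ, a ≤ b →
    ∑ v ∈ Finset.Ico (2 * a) (2 * b), f v
      = ∑ v ∈ Finset.Ico a b, (f (2 * v) + f (2 * v + 1)) := by
  intro b
  induction b with
  | zero => intro h; interval_cases a <;> simp
  | succ b ih =>
    intro h
    rcases Nat.lt_or_ge a (b + 1) with h' | h'
    · have hab : a ≤ b := by omega
      have e1 : 2 * (b + 1) = (2 * b + 1) + 1 := by ring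
      rw [e1, Finset.sum_Ico_succ_top (by omega), Finset.sum_Ico_succ_top (by omega),
        ih hab, Finset.sum_Ico_succ_top hab]
      ring
    · have : a = b + 1 := by omega
      subst this; simp

lemma sum_peel {Φ : Type*} [Fintype Φ] [DecidableEq Φ] [Nonempty Φ] {N : ℕ} (k : Fin N)
    (H : (Fin N → Φ) → Φ → ℝ)
    (hH : ∀ (x : Fin N → Φ) (c d : Φ), H (Function.update x k c) d = H x d) :
    ∑ x : Fin N → Φ, H x (x k)
      = (Fintype.card Φ : ℝ)⁻¹ * ∑ x : Fin N → Φ, ∑ c : Φ, H x c := by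
  classical
  set e := Equiv.funSplitAt k Φ with he
  have hsum : ∀ (F : (Fin N → Φ) → ℝ),
      ∑ x : Fin N → Φ, F x = ∑ c : Φ, ∑ y : {j : Fin N // j ≠ k} → Φ, F (e.symm (c, y)) := by
    intro F
    rw [← Equiv.sum_comp e.symm F, Fintype.sum_prod_type]
  have happ : ∀ (c : Φ) (y : {j : Fin N // j ≠ k} → Φ), (e.symm (c, y)) k = c := by
    intro c y
    simp [he, Equiv.funSplitAt, Equiv.piSplitAt]
  have hupd : ∀ (c c' : Φ) (y : {j : Fin N // j ≠ k} → Φ),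
      e.symm (c, y) = Function.update (e.symm (c', y)) k c := by
    intro c c' y
    funext j
    by_cases hj : j = k
    · subst hj; rw [Function.update_self, happ]
    · rw [Function.update_of_ne hj]
      simp [he, Equiv.funSplitAt, Equiv.piSplitAt, hj]
  have key : ∀ (c d : Φ) (y : {j : Fin N // j ≠ k} → Φ),
      H (e.symm (c, y)) d = H (e.symm (d, y)) d := by
    intro c d y
    rw [hupd c d y, hH]
  have hL : ∑ x : Fin N → Φ, H x (x k)
      = ∑ c : Φ, ∑ y : {j : Fin N // j ≠ k} → Φ, H (e.symm (c, y)) c := by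
    rw [hsum fun x => H x (x k)]
    exact Finset.sum_congr rfl fun c _ => Finset.sum_congr rfl fun y _ => by rw [happ]
  have hR : ∑ x : Fin N → Φ, ∑ c : Φ, H x c
      = (Fintype.card Φ : ℝ) * ∑ x : Fin N → Φ, H x (x k) := by
    rw [hsum fun x => ∑ c : Φ, H x c, hL]
    have : ∀ c : Φ, ∑ y : {j : Fin N // j ≠ k} → Φ, ∑ d : Φ, H (e.symm (c, y)) d
        = ∑ d : Φ, ∑ y : {j : Fin N // j ≠ k} → Φ, H (e.symm (d, y)) d := by
      intro c
      rw [Finset.sum_comm]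
      exact Finset.sum_congr rfl fun d _ => Finset.sum_congr rfl fun y _ => key c d y
    rw [Finset.sum_congr rfl fun c _ => this c]
    rw [Finset.sum_const, Finset.card_univ, nsmul_eq_mul]
  rw [hR, ← mul_assoc, inv_mul_cancel₀, one_mul]
  have : (0:ℝ) < (Fintype.card Φ : ℝ) := by exact_mod_cast Fintype.card_pos
  exact this.ne'
lemma matExp_mulVec_eig {Φ : Type*} [Fintype Φ] [DecidableEq Φ]
    (A : Matrix Φ Φ ℝ) (v : Φ → ℝ) (c : ℝ) (hv : A.mulVec v = c • v) :
    (matExp A).mulVec v = Real.exp c • v := by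
  letI : SeminormedRing (Matrix Φ Φ ℝ) := Matrix.linftyOpSemiNormedRing
  letI : NormedRing (Matrix Φ Φ ℝ) := Matrix.linftyOpNormedRing
  letI : NormedAlgebra ℝ (Matrix Φ Φ ℝ) := Matrix.linftyOpNormedAlgebra
  have hpow : ∀ n : ℕ, (A ^ n).mulVec v = c ^ n • v := by
    intro n
    induction n with
    | zero => simp [Matrix.one_mulVec]
    | succ n ih =>
        rw [pow_succ', ← Matrix.mulVec_mulVec, ih, Matrix.mulVec_smul, hv, smul_smul,
          ← pow_succ]
  have hsum : Summable (fun n : ℕ => ((Nat.factorial n : ℝ))⁻¹ • A ^ n) :=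
    NormedSpace.expSeries_summable' (𝕂 := ℝ) A
  let L : Matrix Φ Φ ℝ →ₗ[ℝ] (Φ → ℝ) :=
    { toFun := fun M => M.mulVec v
      map_add' := fun M N => Matrix.add_mulVec M N v
      map_smul' := fun r M => Matrix.smul_mulVec r M v }
  have hL : Continuous L := L.continuous_of_finiteDimensional
  let Lc : Matrix Φ Φ ℝ →L[ℝ] (Φ → ℝ) := ⟨L, hL⟩
  have : (matExp A).mulVec v = Lc (NormedSpace.exp A) := rfl
  rw [this, NormedSpace.exp_eq_tsum ℝ, Lc.map_tsum hsum]
  have h2 : ∀ n : ℕ, Lc (((Nat.factorial n : ℝ))⁻¹ • A ^ n) = (c ^ n / (Nat.factorial n : ℝ)) • v := by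
    intro n
    have : Lc (((Nat.factorial n : ℝ))⁻¹ • A ^ n) = ((Nat.factorial n : ℝ))⁻¹ • ((A ^ n).mulVec v) := Lc.map_smul _ _
    rw [this, hpow, smul_smul, div_eq_inv_mul]
  simp_rw [h2]
  rw [Summable.tsum_smul_const (Real.summable_pow_div_factorial c)]
  congr 1
  rw [Real.exp_eq_exp_ℝ, NormedSpace.exp_eq_tsum_div]

section MatFacts
variable {Φ : Type*} [Fintype Φ] [DecidableEq Φ]

lemma matExp_row_sum (Q : Matrix Φ Φ ℝ) (hrow : ∀ i, ∑ j : Φ, Q i j = 0)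
    (t : ℝ) (a : Φ) : ∑ c : Φ, matExp (t • Q) a c = 1 := by
  have h0 : (t • Q).mulVec (fun _ => (1 : ℝ)) = (0 : ℝ) • (fun _ => (1 : ℝ)) := by
    have h1 : Q.mulVec (fun _ => (1 : ℝ)) = 0 := by
      funext j
      simp [Matrix.mulVec, dotProduct, hrow]
    rw [Matrix.smul_mulVec, h1]
    simp
  have h2 := congrFun (matExp_mulVec_eig (t • Q) _ 0 h0) a
  simpa [Matrix.mulVec, dotProduct] using h2

lemma matExp_eig (Q : Matrix Φ Φ ℝ) (ν : Φ → ℝ) (hν : Q.mulVec ν = -ν)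
    (t : ℝ) (a : Φ) : ∑ c : Φ, matExp (t • Q) a c * ν c = Real.exp (-t) * ν a := by
  have h0 : (t • Q).mulVec ν = (-t) • ν := by
    rw [Matrix.smul_mulVec, hν, smul_neg, ← neg_smul]
  have h2 := congrFun (matExp_mulVec_eig (t • Q) ν (-t) h0) a
  simpa [Matrix.mulVec, dotProduct] using h2

end MatFacts

lemma gtr_marginal {Φ : Type*} [Fintype Φ] [DecidableEq Φ] [Nonempty Φ]
    (Q : Matrix Φ Φ ℝ) (π ν : Φ → ℝ)
    (hrow : ∀ i, ∑ j : Φ, Q i j = 0)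
    (hν : Q.mulVec ν = -ν)
    (h : ℕ) (τ : ℕ → ℝ) (i : Φ)
    (ℓ : ℕ) (hl1 : 1 ≤ ℓ) (hl2 : ℓ < 2 ^ (h + 1)) :
    ∑ x : Fin (2 ^ (h + 1) - 1) → Φ,
      (if x (idx h 1) = i then π i else 0) *
        (∏ v ∈ Finset.Ico 2 (2 ^ (h + 1)),
          (matExp (τ v • Q)) (x (idx h (v / 2))) (x (idx h v))) *
        ν (x (idx h ℓ))
      = Real.exp (-(pathSum τ 1 ℓ)) * (π i * ν i) := by
  have hb2 := two_le_pow h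
  have hφ : (0 : ℝ) < (Fintype.card Φ : ℝ) := by exact_mod_cast Fintype.card_pos
  have inv : ∀ n, 2 ≤ n → n ≤ 2 ^ (h + 1) →
      ∑ x : Fin (2 ^ (h + 1) - 1) → Φ,
        (if x (idx h 1) = i then π i else 0) *
          (∏ v ∈ Finset.Ico 2 n,
            (matExp (τ v • Q)) (x (idx h (v / 2))) (x (idx h v))) *
          ν (x (idx h (anc n ℓ)))
        = (Fintype.card Φ : ℝ) ^ (2 ^ (h + 1) - n) *
            (Real.exp (-(pathSum τ 1 (anc n ℓ))) * (π i * ν i)) := by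
    intro n hn
    induction n, hn using Nat.le_induction with
    | base =>
      intro _
      rw [anc_two ℓ hl1, pathSum_one_one]
      simp only [Finset.Ico_self, Finset.prod_empty, mul_one]
      have h1 := sum_peel (Φ := Φ) (N := 2 ^ (h + 1) - 1) (idx h 1)
        (fun _ c => (if c = i then π i else 0) * ν c) (fun _ _ _ => rfl)
      rw [h1]
      have h2 : ∑ c : Φ, (if c = i then π i else 0) * ν c = π i * ν i := by
        simp [ite_mul]
      rw [Finset.sum_congr rfl fun x _ => h2, Finset.sum_const, Finset.card_univ,
        nsmul_eq_mul]
      rw [Fintype.card_fun, Fintype.card_fin]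
      have h3 : 2 ^ (h + 1) - 1 = (2 ^ (h + 1) - 2) + 1 := by omega
      rw [h3, pow_succ]
      push_cast
      rw [neg_zero, Real.exp_zero]
      field_simp
    | succ n hn ih =>
      intro hle
      have hn2 : n < 2 ^ (h + 1) := by omega
      have IH := ih (by omega)
      have hsplit : ∀ x : Fin (2 ^ (h + 1) - 1) → Φ,
          ∏ v ∈ Finset.Ico 2 (n + 1),
              (matExp (τ v • Q)) (x (idx h (v / 2))) (x (idx h v))
            = (∏ v ∈ Finset.Ico 2 n,
                (matExp (τ v • Q)) (x (idx h (v / 2))) (x (idx h v))) *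
              (matExp (τ n • Q)) (x (idx h (n / 2))) (x (idx h n)) :=
        fun x => Finset.prod_Ico_succ_top hn _
      have hpowstep : ((Fintype.card Φ : ℝ)) ^ (2 ^ (h + 1) - n)
          = (Fintype.card Φ : ℝ) ^ (2 ^ (h + 1) - (n + 1)) * (Fintype.card Φ : ℝ) := by
        rw [← pow_succ]
        congr 1
        omega
      have hupd_prod : ∀ (x : Fin (2 ^ (h + 1) - 1) → Φ) (c : Φ),
          (∏ v ∈ Finset.Ico 2 n, (matExp (τ v • Q))
              ((Function.update x (idx h n) c) (idx h (v / 2)))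
              ((Function.update x (idx h n) c) (idx h v)))
            = ∏ v ∈ Finset.Ico 2 n,
                (matExp (τ v • Q)) (x (idx h (v / 2))) (x (idx h v)) := by
        intro x c
        refine Finset.prod_congr rfl fun v hv => ?_
        obtain ⟨hv2, hvn⟩ := Finset.mem_Ico.mp hv
        rw [Function.update_of_ne
            (idx_ne (by omega) (by omega) (by omega) hn2 (by omega)),
          Function.update_of_ne
            (idx_ne (by omega) (by omega) (by omega) hn2 (by omega))]
      have hupd1 : ∀ (x : Fin (2 ^ (h + 1) - 1) → Φ) (c : Φ),
          (Function.update x (idx h n) c) (idx h 1) = x (idx h 1) := fun x c =>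
        Function.update_of_ne (idx_ne (by omega) (by omega) (by omega) hn2 (by omega)) _ _
      have hupdp : ∀ (x : Fin (2 ^ (h + 1) - 1) → Φ) (c : Φ),
          (Function.update x (idx h n) c) (idx h (n / 2)) = x (idx h (n / 2)) := fun x c =>
        Function.update_of_ne (idx_ne (by omega) (by omega) (by omega) hn2 (by omega)) _ _
      rcases anc_step hn hl1 with ⟨hA1, hA2⟩ | ⟨hB1, hB2⟩
      · -- on-path case
        have hpeel := sum_peel (Φ := Φ) (N := 2 ^ (h + 1) - 1) (idx h n)
          (fun x c => (if x (idx h 1) = i then π i else 0) *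
            (∏ v ∈ Finset.Ico 2 n,
              (matExp (τ v • Q)) (x (idx h (v / 2))) (x (idx h v))) *
            ((matExp (τ n • Q)) (x (idx h (n / 2))) c * ν c))
          (by
            intro x c d
            simp only [hupd1 x c, hupdp x c, hupd_prod x c])
        have hLHS : ∑ x : Fin (2 ^ (h + 1) - 1) → Φ,
            (if x (idx h 1) = i then π i else 0) *
              (∏ v ∈ Finset.Ico 2 (n + 1),
                (matExp (τ v • Q)) (x (idx h (v / 2))) (x (idx h v))) *
              ν (x (idx h (anc (n + 1) ℓ)))
            = ∑ x : Fin (2 ^ (h + 1) - 1) → Φ,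
              (if x (idx h 1) = i then π i else 0) *
                (∏ v ∈ Finset.Ico 2 n,
                  (matExp (τ v • Q)) (x (idx h (v / 2))) (x (idx h v))) *
                ((matExp (τ n • Q)) (x (idx h (n / 2))) (x (idx h n)) * ν (x (idx h n))) := by
          refine Finset.sum_congr rfl fun x _ => ?_
          rw [hsplit x, hA1]
          ring
        rw [hLHS, hpeel]
        have hin : ∀ x : Fin (2 ^ (h + 1) - 1) → Φ,
            ∑ c : Φ, (if x (idx h 1) = i then π i else 0) *
              (∏ v ∈ Finset.Ico 2 n,
                (matExp (τ v • Q)) (x (idx h (v / 2))) (x (idx h v))) *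
              ((matExp (τ n • Q)) (x (idx h (n / 2))) c * ν c)
            = Real.exp (-(τ n)) *
                ((if x (idx h 1) = i then π i else 0) *
                  (∏ v ∈ Finset.Ico 2 n,
                    (matExp (τ v • Q)) (x (idx h (v / 2))) (x (idx h v))) *
                  ν (x (idx h (anc n ℓ)))) := by
          intro x
          rw [← Finset.mul_sum, matExp_eig Q ν hν (τ n) (x (idx h (n / 2))), hA2]
          ring
        rw [Finset.sum_congr rfl fun x _ => hin x, ← Finset.mul_sum, IH]
        rw [hA1, pathSum_one_step τ hn, hA2, hpowstep, neg_add, Real.exp_add]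
        field_simp
      · -- off-path case
        have hanc1 : 1 ≤ anc n ℓ := anc_pos ℓ hl1
        have hupda : ∀ (x : Fin (2 ^ (h + 1) - 1) → Φ) (c : Φ),
            (Function.update x (idx h n) c) (idx h (anc n ℓ)) = x (idx h (anc n ℓ)) :=
          fun x c => Function.update_of_ne
            (idx_ne (by omega) (by omega) (by omega) hn2 (by omega)) _ _
        have hpeel := sum_peel (Φ := Φ) (N := 2 ^ (h + 1) - 1) (idx h n)
          (fun x c => (if x (idx h 1) = i then π i else 0) *
            (∏ v ∈ Finset.Ico 2 n,
              (matExp (τ v • Q)) (x (idx h (v / 2))) (x (idx h v))) *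
            ν (x (idx h (anc n ℓ))) *
            (matExp (τ n • Q)) (x (idx h (n / 2))) c)
          (by
            intro x c d
            simp only [hupd1 x c, hupdp x c, hupd_prod x c, hupda x c])
        have hLHS : ∑ x : Fin (2 ^ (h + 1) - 1) → Φ,
            (if x (idx h 1) = i then π i else 0) *
              (∏ v ∈ Finset.Ico 2 (n + 1),
                (matExp (τ v • Q)) (x (idx h (v / 2))) (x (idx h v))) *
              ν (x (idx h (anc (n + 1) ℓ)))
            = ∑ x : Fin (2 ^ (h + 1) - 1) → Φ,
              (if x (idx h 1) = i then π i else 0) *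
                (∏ v ∈ Finset.Ico 2 n,
                  (matExp (τ v • Q)) (x (idx h (v / 2))) (x (idx h v))) *
                ν (x (idx h (anc n ℓ))) *
                (matExp (τ n • Q)) (x (idx h (n / 2))) (x (idx h n)) := by
          refine Finset.sum_congr rfl fun x _ => ?_
          rw [hsplit x, hB1]
          ring
        rw [hLHS, hpeel]
        have hin : ∀ x : Fin (2 ^ (h + 1) - 1) → Φ,
            ∑ c : Φ, (if x (idx h 1) = i then π i else 0) *
              (∏ v ∈ Finset.Ico 2 n,
                (matExp (τ v • Q)) (x (idx h (v / 2))) (x (idx h v))) *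
              ν (x (idx h (anc n ℓ))) *
              (matExp (τ n • Q)) (x (idx h (n / 2))) c
            = (if x (idx h 1) = i then π i else 0) *
                (∏ v ∈ Finset.Ico 2 n,
                  (matExp (τ v • Q)) (x (idx h (v / 2))) (x (idx h v))) *
                ν (x (idx h (anc n ℓ))) := by
          intro x
          rw [← Finset.mul_sum, matExp_row_sum Q hrow (τ n) (x (idx h (n / 2))), mul_one]
        rw [Finset.sum_congr rfl fun x _ => hin x, IH, hB1, hpowstep]
        field_simp
  have hfin := inv (2 ^ (h + 1)) hb2 le_rfl
  rw [anc_of_lt hl2] at hfin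
  simpa [Nat.sub_self] using hfin


lemma flow_leaf_sum {h : ℕ} {Ψ : ℕ → ℝ} (hΨ : IsUnitFlow h Ψ) :
    ∑ v ∈ Finset.Ico (2 ^ h) (2 ^ (h + 1)), Ψ v = 1 := by
  obtain ⟨h1, -, hsplit⟩ := hΨ
  have key : ∀ m, m ≤ h → ∑ v ∈ Finset.Ico (2 ^ m) (2 ^ (m + 1)), Ψ v = 1 := by
    intro m
    induction m with
    | zero =>
      intro _
      show ∑ v ∈ Finset.Ico 1 2, Ψ v = 1
      rw [show (2 : ℕ) = 1 + 1 from rfl, Finset.sum_Ico_succ_top (by norm_num),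
        Finset.Ico_self, Finset.sum_empty, zero_add]
      exact h1
    | succ m ih =>
      intro hm
      have e1 : (2 : ℕ) ^ (m + 1) = 2 * 2 ^ m := by rw [pow_succ]; ring
      have e2 : (2 : ℕ) ^ (m + 2) = 2 * 2 ^ (m + 1) := by rw [pow_succ (2 : ℕ) (m + 1)]; ring
      have hp : 1 ≤ (2 : ℕ) ^ m := Nat.one_le_two_pow
      rw [show m + 1 + 1 = m + 2 from rfl, e2, e1,
        sum_Ico_double Ψ (2 ^ m) (2 * 2 ^ m) (by omega)]
      have : ∀ v ∈ Finset.Ico (2 ^ m) (2 * 2 ^ m), Ψ (2 * v) + Ψ (2 * v + 1) = Ψ v := by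
        intro v hv
        obtain ⟨ha, hb⟩ := Finset.mem_Ico.mp hv
        have h1v : 1 ≤ v := le_trans Nat.one_le_two_pow ha
        have h2v : v < 2 ^ h := by
          have : (2 : ℕ) ^ (m + 1) ≤ 2 ^ h := Nat.pow_le_pow_right (by norm_num) (by omega)
          omega
        exact (hsplit v h1v h2v).symm
      rw [Finset.sum_congr rfl this, ← e1]
      exact ih (by omega)
  exact key h le_rfl

lemma piv_zero {Φ : Type*} [Fintype Φ] (Q : Matrix Φ Φ ℝ) (π ν : Φ → ℝ)
    (hQrow : ∀ i, ∑ j : Φ, Q i j = 0)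
    (hrev : ∀ i j, π i * Q i j = π j * Q j i)
    (hν : Q.mulVec ν = -ν) :
    ∑ i : Φ, π i * ν i = 0 := by
  have h1 : ∑ i : Φ, π i * (Q.mulVec ν) i = -∑ i : Φ, π i * ν i := by
    rw [hν]
    simp [mul_neg]
  have h2 : ∑ i : Φ, π i * (Q.mulVec ν) i = 0 := by
    have e1 : ∀ i, π i * (Q.mulVec ν) i = ∑ j : Φ, π i * Q i j * ν j := by
      intro i
      rw [Matrix.mulVec, dotProduct, Finset.mul_sum]
      exact Finset.sum_congr rfl fun j _ => by ring
    rw [Finset.sum_congr rfl fun i _ => e1 i, Finset.sum_comm]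
    have e2 : ∀ j, ∑ i : Φ, π i * Q i j * ν j = 0 := by
      intro j
      have e3 : ∀ i, π i * Q i j * ν j = π j * Q j i * ν j := fun i => by rw [hrev]
      rw [Finset.sum_congr rfl fun i _ => e3 i]
      have : ∑ i : Φ, π j * Q j i * ν j = (π j * ν j) * ∑ i : Φ, Q j i := by
        rw [Finset.mul_sum]
        exact Finset.sum_congr rfl fun i _ => by ring
      rw [this, hQrow, mul_zero]
    rw [Finset.sum_congr rfl fun j _ => e2 j]
    simp
  linarith


/-- (Weighted Majority: GTR Version, mean part.) For every depth `h ≥ 1`, positive edge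
weights, and unit flow `Ψ`: (i) `E[S | ξ_ρ = i] = ν_i`, i.e.
`∑_{x : x_ρ = i} P(x) S(x) = π_i ν_i` for each state `i`; and (ii) `E[S] = 0`. -/
theorem weighted_majority_mean {Φ : Type*} [Fintype Φ] [DecidableEq Φ]
    (hcard : 2 ≤ Fintype.card Φ)
    (Q : Matrix Φ Φ ℝ) (π ν : Φ → ℝ)
    (hQoff : ∀ i j, i ≠ j → 0 < Q i j)
    (hQrow : ∀ i, ∑ j : Φ, Q i j = 0)
    (hπpos : ∀ i, 0 < π i)
    (hπsum : ∑ i : Φ, π i = 1)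
    (hrev : ∀ i j, π i * Q i j = π j * Q j i)
    (hν : Q.mulVec ν = -ν)
    (hnorm : ∑ i : Φ, π i * ν i ^ 2 = 1) :
    ∀ h : ℕ, 1 ≤ h →
    ∀ τ : ℕ → ℝ, (∀ v, 2 ≤ v → v < 2 ^ (h + 1) → 0 < τ v) →
    ∀ Ψ : ℕ → ℝ, IsUnitFlow h Ψ →
      (∀ i : Φ,
        ∑ x : Fin (2 ^ (h + 1) - 1) → Φ,
          (if x (idx h 1) = i then gtrP h π Q τ x * estS h ν τ Ψ x else 0) =
            π i * ν i) ∧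
      ∑ x : Fin (2 ^ (h + 1) - 1) → Φ, gtrP h π Q τ x * estS h ν τ Ψ x = 0 := by
  intro h hh τ hτ Ψ hΨ
  haveI : Nonempty Φ := Fintype.card_pos_iff.mp (by omega)
  have hb2 := two_le_pow h
  have hleafbound : ∀ ℓ ∈ Finset.Ico (2 ^ h) (2 ^ (h + 1)), 1 ≤ ℓ ∧ ℓ < 2 ^ (h + 1) := by
    intro ℓ hℓ
    obtain ⟨ha, hb⟩ := Finset.mem_Ico.mp hℓ
    exact ⟨le_trans Nat.one_le_two_pow ha, hb⟩
  have P1 : ∀ i : Φ,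
      ∑ x : Fin (2 ^ (h + 1) - 1) → Φ,
        (if x (idx h 1) = i then gtrP h π Q τ x * estS h ν τ Ψ x else 0) = π i * ν i := by
    intro i
    have hxform : ∀ x : Fin (2 ^ (h + 1) - 1) → Φ,
        (if x (idx h 1) = i then gtrP h π Q τ x * estS h ν τ Ψ x else 0)
        = ∑ ℓ ∈ Finset.Ico (2 ^ h) (2 ^ (h + 1)),
            (Ψ ℓ * Real.exp (pathSum τ 1 ℓ)) *
              ((if x (idx h 1) = i then π i else 0) *
                (∏ v ∈ Finset.Ico 2 (2 ^ (h + 1)),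
                  (matExp (τ v • Q)) (x (idx h (v / 2))) (x (idx h v))) *
                ν (x (idx h ℓ))) := by
      intro x
      by_cases hx : x (idx h 1) = i
      · rw [if_pos hx]
        simp only [gtrP, estS]
        rw [hx, Finset.mul_sum]
        refine Finset.sum_congr rfl fun ℓ _ => ?_
        rw [if_pos rfl]
        ring
      · rw [if_neg hx]
        symm
        refine Finset.sum_eq_zero fun ℓ hℓ => ?_
        rw [if_neg hx]
        ring
    rw [Finset.sum_congr rfl fun x _ => hxform x, Finset.sum_comm]
    have hinner : ∀ ℓ ∈ Finset.Ico (2 ^ h) (2 ^ (h + 1)),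
        ∑ x : Fin (2 ^ (h + 1) - 1) → Φ,
          (Ψ ℓ * Real.exp (pathSum τ 1 ℓ)) *
            ((if x (idx h 1) = i then π i else 0) *
              (∏ v ∈ Finset.Ico 2 (2 ^ (h + 1)),
                (matExp (τ v • Q)) (x (idx h (v / 2))) (x (idx h v))) *
              ν (x (idx h ℓ)))
          = Ψ ℓ * (π i * ν i) := by
      intro ℓ hℓ
      obtain ⟨hl1, hl2⟩ := hleafbound ℓ hℓ
      rw [← Finset.mul_sum, gtr_marginal Q π ν hQrow hν h τ i ℓ hl1 hl2]
      rw [Real.exp_neg]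
      have := Real.exp_ne_zero (pathSum τ 1 ℓ)
      field_simp
    rw [Finset.sum_congr rfl hinner, ← Finset.sum_mul, flow_leaf_sum hΨ, one_mul]
  refine ⟨P1, ?_⟩
  have hsplit : ∀ x : Fin (2 ^ (h + 1) - 1) → Φ,
      gtrP h π Q τ x * estS h ν τ Ψ x
        = ∑ i : Φ, (if x (idx h 1) = i then gtrP h π Q τ x * estS h ν τ Ψ x else 0) := by
    intro x
    rw [Finset.sum_ite_eq Finset.univ (x (idx h 1))
      (fun _ => gtrP h π Q τ x * estS h ν τ Ψ x)]
    simp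
  rw [Finset.sum_congr rfl fun x _ => hsplit x, Finset.sum_comm]
  rw [Finset.sum_congr rfl fun i _ => P1 i]
  exact piv_zero Q π ν hQrow hrev hν
end

section
/- (Lemma 'Recursion Step'.) For every f > 0 there exists a constant c > 0, depending only on Q and f, such that for every τ ≥ f, every i ∈ Φ, and every x ∈ ℝ: ∑_{j∈Φ} (exp(τQ))_{ij} exp(ν_j x) ≤ exp( e^{−τ} ν_i x + (1/2) c (1 − e^{−2τ}) x² ). -/
open scoped BigOperators

-- scalar lemma A
lemma exp_le_self_add_exp_sq (t : ℝ) : Real.exp t ≤ t + Real.exp (t ^ 2) := by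
  have h1 : (1:ℝ) + t ^ 2 ≤ Real.exp (t ^ 2) := by
    have := Real.add_one_le_exp (t ^ 2); linarith
  rcases le_or_gt |t| 1 with h | h
  · have hb := Real.exp_bound h (by norm_num : 0 < 2)
    have hsum : ∑ i ∈ Finset.range 2, t ^ i / (Nat.factorial i) = 1 + t := by
      simp [Finset.sum_range_succ, Nat.factorial]
    rw [hsum] at hb
    have h2 : Real.exp t - (1 + t) ≤ t ^ 2 * (3 / 4) := by
      have := le_abs_self (Real.exp t - (1 + t))
      norm_num [Nat.factorial] at hb
      linarith
    have h4 : |t| ^ 2 = t ^ 2 := sq_abs t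
    nlinarith
  · rcases le_or_gt 0 t with ht | ht
    · have h1t : 1 < t := by rwa [abs_of_nonneg ht] at h
      have : Real.exp t ≤ Real.exp (t ^ 2) := Real.exp_le_exp.mpr (by nlinarith)
      linarith
    · have hle : Real.exp t ≤ 1 := by
        have := Real.exp_le_exp.mpr (le_of_lt ht)
        simpa using this
      have habs : 1 < -t := by rwa [abs_of_neg ht] at h
      nlinarith

-- scalar lemma C
lemma key_scalar (m M x : ℝ) (hM : 0 < M) (hm : |m| ≤ M) :
    m * x + Real.exp ((M * x) ^ 2) ≤ Real.exp (m * x + 4 * M ^ 2 * x ^ 2) := by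
  have hMx : (M * x) ^ 2 = M ^ 2 * x ^ 2 := by ring
  have e1 : 1 + m * x ≤ Real.exp (m * x) := by
    have := Real.add_one_le_exp (m * x); linarith
  have eadd : Real.exp (m * x + 4 * M ^ 2 * x ^ 2)
      = Real.exp (m * x) * Real.exp (4 * M ^ 2 * x ^ 2) := Real.exp_add _ _
  rcases le_or_gt 0 (m * x) with hmx | hmx
  · have e2 : Real.exp ((M * x) ^ 2) ≤ Real.exp (4 * M ^ 2 * x ^ 2) :=
      Real.exp_le_exp.mpr (by nlinarith)
    have e4 : (1:ℝ) ≤ Real.exp (4 * M ^ 2 * x ^ 2) :=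
      Real.one_le_exp (by positivity)
    nlinarith [Real.exp_pos (4 * M ^ 2 * x ^ 2), Real.exp_pos (m * x)]
  · have hmxabs : |m * x| ≤ M * |x| := by
      rw [abs_mul]; exact mul_le_mul_of_nonneg_right hm (abs_nonneg x)
    rcases le_or_gt (M ^ 2 * x ^ 2) (1/4) with hs | hs
    · have hsq : (m * x) ^ 2 ≤ M ^ 2 * x ^ 2 := by
        nlinarith [sq_abs (m * x), sq_abs x, abs_nonneg (m*x), abs_nonneg x,
          mul_nonneg hM.le (abs_nonneg x)]
      have hmx1 : |m * x| ≤ 1/2 := by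
        nlinarith [abs_nonneg (m * x), sq_abs (m * x)]
      have h1mx : 0 < 1 + m * x := by
        have := neg_abs_le (m * x); linarith
      have e5 : 1 + 4 * M ^ 2 * x ^ 2 ≤ Real.exp (4 * M ^ 2 * x ^ 2) := by
        have := Real.add_one_le_exp (4 * M ^ 2 * x ^ 2); linarith
      have eA : (1 + m * x) * (1 + 4 * M ^ 2 * x ^ 2) ≤ Real.exp (m * x + 4 * M ^ 2 * x ^ 2) := by
        rw [eadd]
        have h2 : (0:ℝ) < 1 + 4 * M ^ 2 * x ^ 2 := by positivity
        nlinarith [Real.exp_pos (m * x)]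
      have eB : Real.exp ((M * x) ^ 2) ≤ 1 + 2 * (M ^ 2 * x ^ 2) := by
        have hlt : (M * x) ^ 2 < 1 := by nlinarith
        have hb := Real.exp_bound_div_one_sub_of_interval (by positivity) hlt
        have h2 : 1 / (1 - (M * x) ^ 2) ≤ 1 + 2 * (M ^ 2 * x ^ 2) := by
          rw [div_le_iff₀ (by nlinarith)]
          nlinarith
        linarith
      have hneg : -(1/2) ≤ m * x := by have := neg_abs_le (m * x); linarith
      nlinarith [sq_nonneg x, sq_nonneg M, mul_nonneg (sq_nonneg M) (sq_nonneg x)]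
    · -- large |x| case, m*x < 0
      have hmxle : -(m * x) ≤ M * |x| := by
        have := neg_abs_le (m * x); linarith
      have hMabs : 1/2 < M * |x| := by
        nlinarith [sq_abs x, mul_nonneg hM.le (abs_nonneg x)]
      have hexp : (M * x) ^ 2 ≤ m * x + 4 * M ^ 2 * x ^ 2 := by
        nlinarith [sq_abs x, mul_nonneg hM.le (abs_nonneg x)]
      have := Real.exp_le_exp.mpr hexp
      linarith



section MatrixAux
variable {Φ : Type*} [Fintype Φ] [DecidableEq Φ]

lemma matExp_eq_tsum (A : Matrix Φ Φ ℝ) :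
    matExp A = ∑' n : ℕ, ((n.factorial : ℝ)⁻¹) • A ^ n := by
  letI : SeminormedRing (Matrix Φ Φ ℝ) := Matrix.linftyOpSemiNormedRing
  letI : NormedRing (Matrix Φ Φ ℝ) := Matrix.linftyOpNormedRing
  letI : NormedAlgebra ℝ (Matrix Φ Φ ℝ) := Matrix.linftyOpNormedAlgebra
  exact congrFun (NormedSpace.exp_eq_tsum ℝ) A

lemma summable_expSeries (A : Matrix Φ Φ ℝ) :
    Summable (fun n : ℕ => ((n.factorial : ℝ)⁻¹) • A ^ n) := by
  letI : SeminormedRing (Matrix Φ Φ ℝ) := Matrix.linftyOpSemiNormedRing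
  letI : NormedRing (Matrix Φ Φ ℝ) := Matrix.linftyOpNormedRing
  letI : NormedAlgebra ℝ (Matrix Φ Φ ℝ) := Matrix.linftyOpNormedAlgebra
  exact NormedSpace.expSeries_summable' A

/-- `A ↦ A.mulVec v` as a linear map. -/
def mulVecRight (v : Φ → ℝ) : Matrix Φ Φ ℝ →ₗ[ℝ] (Φ → ℝ) where
  toFun A := A.mulVec v
  map_add' A B := Matrix.add_mulVec A B v
  map_smul' c A := Matrix.smul_mulVec c A v

lemma matExp_mulVec_eigen (A : Matrix Φ Φ ℝ) (v : Φ → ℝ) (lam : ℝ)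
    (h : A.mulVec v = lam • v) :
    (matExp A).mulVec v = Real.exp lam • v := by
  have hpow : ∀ n : ℕ, (A ^ n).mulVec v = lam ^ n • v := by
    intro n
    induction n with
    | zero => simp [Matrix.one_mulVec]
    | succ n ih =>
      rw [pow_succ', ← Matrix.mulVec_mulVec, ih, Matrix.mulVec_smul, h, smul_smul, ← pow_succ]
  have hL : Continuous (mulVecRight (Φ := Φ) v) :=
    LinearMap.continuous_of_finiteDimensional _
  let L : Matrix Φ Φ ℝ →L[ℝ] (Φ → ℝ) := ⟨mulVecRight v, hL⟩
  have key : L (matExp A) = ∑' n : ℕ, L (((n.factorial : ℝ)⁻¹) • A ^ n) := by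
    rw [matExp_eq_tsum]
    exact L.map_tsum (summable_expSeries A)
  have key2 : (matExp A).mulVec v
      = ∑' n : ℕ, (((n.factorial : ℝ)⁻¹) * lam ^ n) • v := by
    rw [show (matExp A).mulVec v = L (matExp A) from rfl, key]
    refine tsum_congr fun n => ?_
    show (((n.factorial : ℝ)⁻¹) • A ^ n).mulVec v = _
    rw [Matrix.smul_mulVec, hpow, smul_smul]
  rw [key2, Summable.tsum_smul_const]
  · congr 1
    have hsum : ∑' n : ℕ, ((n.factorial : ℝ)⁻¹) • lam ^ n = Real.exp lam := by
      rw [Real.exp_eq_exp_ℝ, NormedSpace.exp_eq_tsum ℝ]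
    simpa [smul_eq_mul] using hsum
  · have : Summable (fun n : ℕ => ((n.factorial : ℝ)⁻¹) • lam ^ n) :=
      NormedSpace.expSeries_summable' lam
    simpa [smul_eq_mul] using this

/-- `A ↦ A i j` as a linear map. -/
def entryLM (i j : Φ) : Matrix Φ Φ ℝ →ₗ[ℝ] ℝ where
  toFun A := A i j
  map_add' A B := rfl
  map_smul' c A := rfl

lemma matExp_entry_nonneg_of_nonneg (B : Matrix Φ Φ ℝ) (hB : ∀ a b, 0 ≤ B a b) (i j : Φ) :
    0 ≤ matExp B i j := by
  have hL : Continuous (entryLM (Φ := Φ) i j) :=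
    LinearMap.continuous_of_finiteDimensional _
  let L : Matrix Φ Φ ℝ →L[ℝ] ℝ := ⟨entryLM i j, hL⟩
  have key : L (matExp B) = ∑' n : ℕ, L (((n.factorial : ℝ)⁻¹) • B ^ n) := by
    rw [matExp_eq_tsum]
    exact L.map_tsum (summable_expSeries B)
  have hpow : ∀ n a b, 0 ≤ (B ^ n) a b := by
    intro n
    induction n with
    | zero =>
      intro a b
      by_cases h : a = b <;> simp [pow_zero, Matrix.one_apply, h]
    | succ n ih =>
      intro a b
      rw [pow_succ, Matrix.mul_apply]
      exact Finset.sum_nonneg fun k _ => mul_nonneg (ih a k) (hB k b)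
  have : 0 ≤ L (matExp B) := by
    rw [key]
    refine tsum_nonneg fun n => ?_
    show 0 ≤ (((n.factorial : ℝ)⁻¹) • B ^ n) i j
    have : (((n.factorial : ℝ)⁻¹) • B ^ n) i j = ((n.factorial : ℝ)⁻¹) * (B ^ n) i j := rfl
    rw [this]
    exact mul_nonneg (by positivity) (hpow n i j)
  exact this

lemma matExp_entry_nonneg (A : Matrix Φ Φ ℝ) (hA : ∀ a b, a ≠ b → 0 ≤ A a b) (i j : Φ) :
    0 ≤ matExp A i j := by
  set r : ℝ := ∑ k, |A k k| with hr
  have hrk : ∀ k, -(A k k) ≤ r := by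
    intro k
    calc -(A k k) ≤ |A k k| := neg_le_abs _
      _ ≤ r := Finset.single_le_sum (fun a _ => abs_nonneg (A a a)) (Finset.mem_univ k)
  set B : Matrix Φ Φ ℝ := A + r • (1 : Matrix Φ Φ ℝ) with hB
  have hBnn : ∀ a b, 0 ≤ B a b := by
    intro a b
    by_cases h : a = b
    · subst h
      simp only [hB, Matrix.add_apply, Matrix.smul_apply, Matrix.one_apply_eq, smul_eq_mul,
        mul_one]
      linarith [hrk a]
    · simp only [hB, Matrix.add_apply, Matrix.smul_apply, Matrix.one_apply_ne h, smul_eq_mul,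
        mul_zero, add_zero]
      exact hA a b h
  have hdec : A = Matrix.diagonal (fun _ : Φ => -r) + B := by
    rw [hB, ← Matrix.smul_one_eq_diagonal, neg_smul]
    abel
  have hcomm : Commute (Matrix.diagonal (fun _ : Φ => -r)) B := by
    rw [← Matrix.smul_one_eq_diagonal]
    exact (Commute.one_left B).smul_left (-r)
  have hsplit : matExp A = Matrix.diagonal (fun _ : Φ => Real.exp (-r)) * matExp B := by
    rw [matExp, hdec, Matrix.exp_add_of_commute _ _ hcomm, Matrix.exp_diagonal]
    rw [matExp]
    have hre : (NormedSpace.exp (fun _ : Φ => -r) : Φ → ℝ) = fun _ => Real.exp (-r) := by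
      funext k
      rw [Pi.coe_exp]
      exact (congrFun Real.exp_eq_exp_ℝ (-r)).symm
    rw [hre]
  rw [hsplit, Matrix.diagonal_mul]
  exact mul_nonneg (Real.exp_pos _).le (matExp_entry_nonneg_of_nonneg B hBnn i j)

end MatrixAux


section FinHoeffding
variable {Φ : Type*} [Fintype Φ] [DecidableEq Φ]

lemma sum_exp_le_aux (p ν : Φ → ℝ) (M m x : ℝ) (hp : ∀ j, 0 ≤ p j)
    (hps : ∑ j, p j = 1) (hν : ∀ j, |ν j| ≤ M) (hM : 0 < M)
    (hmean : ∑ j, p j * ν j = m) (hm : |m| ≤ M) :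
    ∑ j, p j * Real.exp (ν j * x) ≤ Real.exp (m * x + 4 * M ^ 2 * x ^ 2) := by
  have step1 : ∀ j, Real.exp (ν j * x) ≤ ν j * x + Real.exp ((M * x) ^ 2) := by
    intro j
    have h := exp_le_self_add_exp_sq (ν j * x)
    have h2 : Real.exp ((ν j * x) ^ 2) ≤ Real.exp ((M * x) ^ 2) := by
      have hsq : (ν j) ^ 2 ≤ M ^ 2 := by nlinarith [sq_abs (ν j), hν j, abs_nonneg (ν j)]
      apply Real.exp_le_exp.mpr
      nlinarith [mul_le_mul_of_nonneg_right hsq (sq_nonneg x)]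
    linarith
  have step2 : ∑ j, p j * Real.exp (ν j * x)
      ≤ ∑ j, p j * (ν j * x + Real.exp ((M * x) ^ 2)) :=
    Finset.sum_le_sum fun j _ => mul_le_mul_of_nonneg_left (step1 j) (hp j)
  have expand : ∑ j, p j * (ν j * x + Real.exp ((M * x) ^ 2))
      = m * x + Real.exp ((M * x) ^ 2) := by
    have h1 : ∑ j, p j * (ν j * x + Real.exp ((M * x) ^ 2))
        = (∑ j, p j * ν j) * x + (∑ j, p j) * Real.exp ((M * x) ^ 2) := by
      rw [Finset.sum_mul, Finset.sum_mul]
      rw [← Finset.sum_add_distrib]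
      refine Finset.sum_congr rfl fun j _ => ?_
      ring
    rw [h1, hmean, hps, one_mul]
  calc ∑ j, p j * Real.exp (ν j * x) ≤ m * x + Real.exp ((M * x) ^ 2) := by
        rw [← expand]; exact step2
    _ ≤ Real.exp (m * x + 4 * M ^ 2 * x ^ 2) := key_scalar m M x hM hm

end FinHoeffding


/-- (Recursion Step.) For every `f > 0` there is `c > 0`, depending only on `Q` and `f`,
such that for every `τ ≥ f`, every state `i` and every `x ∈ ℝ`:
`∑_j (exp(τQ))_{ij} exp(ν_j x) ≤ exp(e^{−τ} ν_i x + (1/2) c (1 − e^{−2τ}) x²)`. -/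
theorem recursion_step {Φ : Type*} [Fintype Φ] [DecidableEq Φ]
    (hcard : 2 ≤ Fintype.card Φ)
    (Q : Matrix Φ Φ ℝ) (π ν : Φ → ℝ)
    (hQoff : ∀ i j, i ≠ j → 0 < Q i j)
    (hQrow : ∀ i, ∑ j : Φ, Q i j = 0)
    (hπpos : ∀ i, 0 < π i)
    (hπsum : ∑ i : Φ, π i = 1)
    (hrev : ∀ i j, π i * Q i j = π j * Q j i)
    (hν : Q.mulVec ν = -ν)
    (hnorm : ∑ i : Φ, π i * ν i ^ 2 = 1) :
    ∀ f : ℝ, 0 < f → ∃ c : ℝ, 0 < c ∧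
      ∀ τ : ℝ, f ≤ τ → ∀ i : Φ, ∀ x : ℝ,
        ∑ j : Φ, (matExp (τ • Q)) i j * Real.exp (ν j * x) ≤
          Real.exp (Real.exp (-τ) * ν i * x +
            (1 / 2) * c * (1 - Real.exp (-(2 * τ))) * x ^ 2) := by
  intro f hf
  set M : ℝ := (∑ j, |ν j|) + 1 with hMdef
  have hM0 : 0 < M := by
    have : 0 ≤ ∑ j, |ν j| := Finset.sum_nonneg fun j _ => abs_nonneg _
    linarith
  have hMb : ∀ j, |ν j| ≤ M := by
    intro j
    have : |ν j| ≤ ∑ k, |ν k| :=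
      Finset.single_le_sum (fun a _ => abs_nonneg (ν a)) (Finset.mem_univ j)
    linarith
  have hd : 0 < 1 - Real.exp (-(2 * f)) := by
    have : Real.exp (-(2 * f)) < Real.exp 0 := Real.exp_lt_exp.mpr (by linarith)
    simpa using this
  refine ⟨8 * M ^ 2 / (1 - Real.exp (-(2 * f))), div_pos (by positivity) hd, ?_⟩
  set c : ℝ := 8 * M ^ 2 / (1 - Real.exp (-(2 * f))) with hcdef
  have hc0 : 0 < c := div_pos (by positivity) hd
  have hcd : c * (1 - Real.exp (-(2 * f))) = 8 * M ^ 2 := by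
    rw [hcdef]; field_simp
  intro τ hτ i x
  have hτ0 : 0 < τ := lt_of_lt_of_le hf hτ
  -- row entries of matExp (τ • Q) are nonnegative
  have hpnn : ∀ a b, 0 ≤ matExp (τ • Q) a b := by
    intro a b
    apply matExp_entry_nonneg
    intro a' b' hab
    have : (τ • Q) a' b' = τ * Q a' b' := rfl
    rw [this]
    exact mul_nonneg hτ0.le (hQoff a' b' hab).le
  -- row sums are 1
  have hrow1 : (τ • Q).mulVec (fun _ => (1:ℝ)) = (0:ℝ) • (fun _ => (1:ℝ)) := by
    funext a
    simp only [Matrix.mulVec, dotProduct, Matrix.smul_apply, smul_eq_mul, mul_one,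
      zero_smul, Pi.zero_apply]
    rw [← Finset.mul_sum, hQrow a, mul_zero]
  have hrows : ∑ j, matExp (τ • Q) i j = 1 := by
    have h := matExp_mulVec_eigen (τ • Q) (fun _ => (1:ℝ)) 0 hrow1
    have h2 := congrFun h i
    simp only [Matrix.mulVec, dotProduct, mul_one, Real.exp_zero, one_smul] at h2
    exact h2
  -- mean
  have heig : (τ • Q).mulVec ν = (-τ) • ν := by
    rw [Matrix.smul_mulVec, hν]
    funext a
    simp [smul_eq_mul]
  have hmean : ∑ j, matExp (τ • Q) i j * ν j = Real.exp (-τ) * ν i := by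
    have h := matExp_mulVec_eigen (τ • Q) ν (-τ) heig
    have h2 := congrFun h i
    simp only [Matrix.mulVec, dotProduct, Pi.smul_apply, smul_eq_mul] at h2
    exact h2
  -- apply the sub-Gaussian bound
  have hmabs : |Real.exp (-τ) * ν i| ≤ M := by
    rw [abs_mul, abs_of_pos (Real.exp_pos _)]
    have h1 : Real.exp (-τ) ≤ 1 := by
      rw [show (1:ℝ) = Real.exp 0 from (Real.exp_zero).symm]
      exact Real.exp_le_exp.mpr (by linarith)
    calc Real.exp (-τ) * |ν i| ≤ 1 * |ν i| :=
          mul_le_mul_of_nonneg_right h1 (abs_nonneg _)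
      _ = |ν i| := one_mul _
      _ ≤ M := hMb i
  have main := sum_exp_le_aux (fun j => matExp (τ • Q) i j) ν M (Real.exp (-τ) * ν i) x
    (fun j => hpnn i j) hrows hMb hM0 hmean hmabs
  refine le_trans main (Real.exp_le_exp.mpr ?_)
  -- exponent comparison
  have hmono : Real.exp (-(2 * τ)) ≤ Real.exp (-(2 * f)) :=
    Real.exp_le_exp.mpr (by linarith)
  have hq : 8 * M ^ 2 ≤ c * (1 - Real.exp (-(2 * τ))) := by
    rw [← hcd]
    exact mul_le_mul_of_nonneg_left (by linarith) hc0.le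
  have hx2 : (0:ℝ) ≤ x ^ 2 := sq_nonneg x
  have h8 : 8 * M ^ 2 * x ^ 2 ≤ c * (1 - Real.exp (-(2 * τ))) * x ^ 2 :=
    mul_le_mul_of_nonneg_right hq hx2
  clear_value M c
  linarith
end

section
/- (Uniform bound on K_Ψ in the Kesten–Stigum zone.) Let g* = ln √2 and let 0 < g < g*. For every integer h ≥ 1 and every edge-weight assignment with 0 < τ_v ≤ g for all nonempty v, the homogeneous unit flow Ψ(v) = 2^{−|v|} (where |v| is the length of the string v) satisfies K_Ψ ≤ 1 / (1 − e^{−2(g* − g)}). In particular the bound is independent of h. -/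
open scoped BigOperators

lemma log2_of_lt_two {v : ℕ} (h : v < 2) : Nat.log2 v = 0 := by
  rw [Nat.log2_def, if_neg (by omega)]

lemma log2_succ {v : ℕ} (h : 2 ≤ v) : Nat.log2 v = Nat.log2 (v / 2) + 1 := by
  conv_lhs => rw [Nat.log2_def]
  simp [h]

lemma pathSum_le (τ : ℕ → ℝ) (g : ℝ) :
    ∀ v, (∀ w, 2 ≤ w → w ≤ v → τ w ≤ g) → pathSum τ 1 v ≤ (Nat.log2 v : ℝ) * g := by
  intro v
  induction v using Nat.strong_induction_on with
  | _ v ih =>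
    intro hτ
    rw [pathSum]
    split_ifs with hv
    · rw [log2_of_lt_two (by omega)]; simp
    · have h2 : 2 ≤ v := by omega
      have ihv := ih (v / 2) (by omega) (fun w hw hw2 => hτ w hw (by omega))
      have hτv := hτ v h2 le_rfl
      rw [log2_succ h2]
      push_cast
      nlinarith [ihv, hτv]

lemma sum_log2_pow (c : ℝ) : ∀ h : ℕ,
    ∑ v ∈ Finset.Ico 2 (2 ^ (h + 1)), c ^ Nat.log2 v
      = ∑ m ∈ Finset.Ico 1 (h + 1), (2 * c) ^ m := by
  intro h
  induction h with
  | zero => simp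
  | succ n ihn =>
    have h1 : (2 : ℕ) ≤ 2 ^ (n + 1) := by
      have := Nat.one_le_two_pow (n := n); calc (2:ℕ) = 2^1 := rfl
        _ ≤ 2 ^ (n+1) := Nat.pow_le_pow_right (by norm_num) (by omega)
    have h2 : (2 : ℕ) ^ (n + 1) ≤ 2 ^ (n + 2) := Nat.pow_le_pow_right (by norm_num) (by omega)
    rw [← Finset.sum_Ico_consecutive _ h1 h2, ihn,
      Finset.sum_Ico_succ_top (by omega : 1 ≤ n + 1)]
    congr 1
    have hconst : ∀ v ∈ Finset.Ico (2 ^ (n + 1)) (2 ^ (n + 2)), c ^ Nat.log2 v = c ^ (n + 1) := by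
      intro v hv
      simp only [Finset.mem_Ico] at hv
      rw [Nat.log2_eq_log_two, Nat.log_eq_of_pow_le_of_lt_pow hv.1 hv.2]
    rw [Finset.sum_congr rfl hconst, Finset.sum_const, Nat.card_Ico]
    have : 2 ^ (n + 2) - 2 ^ (n + 1) = 2 ^ (n + 1) := by
      have : (2:ℕ) ^ (n + 2) = 2 * 2 ^ (n + 1) := by ring
      omega
    rw [this, nsmul_eq_mul, mul_pow]
    push_cast
    ring

/-- (Uniform bound on `K_Ψ` in the Kesten–Stigum zone.) Let `g* = ln √2` and
`0 < g < g*`. For every depth `h ≥ 1` and edge weights with `0 < τ_v ≤ g`, the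
homogeneous unit flow `Ψ(v) = 2^{−|v|}` (where `|v| = log₂ v` is the string length of
`v`) satisfies `K_Ψ ≤ 1 / (1 − e^{−2(g* − g)})`, a bound independent of `h`. -/
theorem kflow_uniform_bound (g : ℝ) (hg0 : 0 < g) (hg : g < Real.log (Real.sqrt 2)) :
    ∀ h : ℕ, 1 ≤ h →
    ∀ τ : ℕ → ℝ, (∀ v, 2 ≤ v → v < 2 ^ (h + 1) → 0 < τ v ∧ τ v ≤ g) →
      Kflow h τ (fun v => ((2 : ℝ) ^ Nat.log2 v)⁻¹) ≤
        1 / (1 - Real.exp (-(2 * (Real.log (Real.sqrt 2) - g)))) := by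
  intro h hh τ hτ
  set gs := Real.log (Real.sqrt 2) with hgs
  have hlog : 2 * gs = Real.log 2 := by
    rw [hgs, Real.log_sqrt (by norm_num)]; ring
  set r := Real.exp (2 * g) / 2 with hr
  have hrpos : 0 < r := by positivity
  have hr1 : r < 1 := by
    rw [hr, div_lt_one (by norm_num)]
    calc Real.exp (2 * g) < Real.exp (Real.log 2) := by
          apply Real.exp_lt_exp.mpr; rw [← hlog]; linarith
      _ = 2 := Real.exp_log (by norm_num)
  have hre : Real.exp (-(2 * (gs - g))) = r := by
    rw [hr, show -(2 * (gs - g)) = 2 * g - Real.log 2 by rw [← hlog]; ring,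
      Real.exp_sub, Real.exp_log (by norm_num : (0:ℝ) < 2)]
  rw [hre]
  have key : Kflow h τ (fun v => ((2 : ℝ) ^ Nat.log2 v)⁻¹)
      ≤ ∑ v ∈ Finset.Ico 2 (2 ^ (h + 1)), (r / 2) ^ Nat.log2 v := by
    apply Finset.sum_le_sum
    intro v hv
    simp only [Finset.mem_Ico] at hv
    set m := Nat.log2 v with hm
    have hps : pathSum τ 1 v ≤ (m : ℝ) * g :=
      pathSum_le τ g v (fun w hw hw2 => (hτ w hw (by omega)).2)
    have hbc : (0:ℝ) ≤ Real.exp (2 * pathSum τ 1 v) * (((2 : ℝ) ^ m)⁻¹) ^ 2 := by positivity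
    have h1 : (1 - Real.exp (-(2 * τ v))) ≤ 1 := by
      have := Real.exp_pos (-(2 * τ v)); linarith
    calc (1 - Real.exp (-(2 * τ v))) * Real.exp (2 * pathSum τ 1 v) * (((2 : ℝ) ^ m)⁻¹) ^ 2
        ≤ Real.exp (2 * pathSum τ 1 v) * (((2 : ℝ) ^ m)⁻¹) ^ 2 := by
          rw [mul_assoc]; exact mul_le_of_le_one_left hbc h1
      _ ≤ Real.exp ((m : ℝ) * (2 * g)) * (((2 : ℝ) ^ m)⁻¹) ^ 2 := by
          apply mul_le_mul_of_nonneg_right _ (by positivity)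
          apply Real.exp_le_exp.mpr; nlinarith
      _ = (r / 2) ^ m := by
          rw [Real.exp_nat_mul, hr, div_div, div_pow, div_eq_mul_inv]
          congr 1
          rw [show ((2:ℝ)*2)^m = ((2:ℝ)^m)^2 by rw [mul_pow, sq], inv_pow]
  have keysum : ∑ v ∈ Finset.Ico 2 (2 ^ (h + 1)), (r / 2) ^ Nat.log2 v
      = ∑ m ∈ Finset.Ico 1 (h + 1), r ^ m := by
    rw [sum_log2_pow (r / 2) h]
    congr 1; ext m; congr 1; field_simp
  have geo : ∑ m ∈ Finset.Ico 1 (h + 1), r ^ m ≤ 1 / (1 - r) := by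
    have hsub : ∑ m ∈ Finset.Ico 1 (h + 1), r ^ m ≤ ∑ m ∈ Finset.range (h + 1), r ^ m := by
      apply Finset.sum_le_sum_of_subset_of_nonneg
      · intro i hi; simp only [Finset.mem_Ico] at hi; simp; omega
      · intro i _ _; positivity
    have hgeom : ∑ m ∈ Finset.range (h + 1), r ^ m = (1 - r ^ (h + 1)) / (1 - r) := by
      rw [geom_sum_eq (by linarith : r ≠ 1)]
      rw [div_eq_div_iff (by linarith) (by linarith)]
      ring
    have : (1 - r ^ (h + 1)) / (1 - r) ≤ 1 / (1 - r) := by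
      gcongr
      · have : (0:ℝ) ≤ r ^ (h + 1) := by positivity
        linarith
    linarith [hsub, hgeom ▸ hsub]
  calc Kflow h τ (fun v => ((2 : ℝ) ^ Nat.log2 v)⁻¹)
      ≤ ∑ v ∈ Finset.Ico 2 (2 ^ (h + 1)), (r / 2) ^ Nat.log2 v := key
    _ = ∑ m ∈ Finset.Ico 1 (h + 1), r ^ m := keysum
    _ ≤ 1 / (1 - r) := geo
end
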